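/- arXiv:2509.17590 — 2 statements merged into one kernel-verified Lean document; each statement's English description precedes it below -/
import Mathlib

section
/- E[(‖S_n‖ − μ̂ᵀS_n)^2]/n → 0 as n → ∞; that is, (‖S_n‖ − μ̂ᵀS_n)/√n → 0 in L^2. -/
open MeasureTheory ProbabilityTheory Filter


lemma Integrable.of_abs_bound {Ω : Type*} [MeasurableSpace Ω] {μ : Measure Ω} [IsFiniteMeasure μ]
    {f : Ω → ℝ} (hf : Measurable f) {B : ℝ} (hb : ∀ ω, |f ω| ≤ B) : Integrable f μ :=
  MeasureTheory.Integrable.mono' (integrable_const B) hf.aestronglyMeasurable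
    (ae_of_all _ (by simpa [Real.norm_eq_abs] using hb))

lemma moment24 {Ω : Type*} [MeasurableSpace Ω] (μ : Measure Ω) [IsProbabilityMeasure μ]
    (ξ : ℕ → Ω → ℝ) (hm : ∀ i, Measurable (ξ i))
    (hindep : iIndepFun ξ μ)
    (B : ℝ) (hB : 0 ≤ B) (hb : ∀ i ω, |ξ i ω| ≤ B)
    (h0 : ∀ i, ∫ ω, ξ i ω ∂μ = 0) (n : ℕ) :
    (∫ ω, (∑ i ∈ Finset.range n, ξ i ω) ^ 2 ∂μ ≤ n * B ^ 2) ∧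
    (∫ ω, (∑ i ∈ Finset.range n, ξ i ω) ^ 4 ∂μ ≤ 3 * n ^ 2 * B ^ 4) := by
  induction n with
  | zero => simp
  | succ n ih =>
    set s : Ω → ℝ := fun ω => ∑ i ∈ Finset.range n, ξ i ω with hs
    have hsm : Measurable s := by
      apply Finset.measurable_sum
      intro i _; exact hm i
    have hsb : ∀ ω, |s ω| ≤ n * B := by
      intro ω
      calc |s ω| ≤ ∑ i ∈ Finset.range n, |ξ i ω| := Finset.abs_sum_le_sum_abs _ _
        _ ≤ ∑ i ∈ Finset.range n, B := Finset.sum_le_sum (fun i _ => hb i ω)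
        _ = n * B := by simp [mul_comm]
    have hind : IndepFun s (ξ n) μ := by
      have := hindep.indepFun_sum_range_succ hm n
      convert this using 1
      ext ω; simp [hs]
    -- integrability of powers and products
    have hintpow : ∀ (k j : ℕ), Integrable (fun ω => (s ω) ^ k * (ξ n ω) ^ j) μ := by
      intro k j
      refine Integrable.of_abs_bound (by fun_prop) (B := (n*B)^k * B^j) ?_
      intro ω
      rw [abs_mul, abs_pow, abs_pow]
      exact mul_le_mul (pow_le_pow_left₀ (abs_nonneg _) (hsb ω) k)
        (pow_le_pow_left₀ (abs_nonneg _) (hb n ω) j) (by positivity) (by positivity)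
    have hprod : ∀ (k j : ℕ), ∫ ω, (s ω) ^ k * (ξ n ω) ^ j ∂μ
        = (∫ ω, (s ω) ^ k ∂μ) * (∫ ω, (ξ n ω) ^ j ∂μ) := by
      intro k j
      have : IndepFun (fun ω => (s ω) ^ k) (fun ω => (ξ n ω) ^ j) μ :=
        hind.comp (measurable_id.pow_const k) (measurable_id.pow_const j)
      exact this.integral_fun_mul_eq_mul_integral
        (hsm.pow_const k).aestronglyMeasurable ((hm n).pow_const j).aestronglyMeasurable
    have hs0 : ∫ ω, s ω ∂μ = 0 := by
      rw [hs]
      rw [integral_finset_sum _ (fun i _ => Integrable.of_abs_bound (hm i) (hb i))]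
      simp [h0]
    have hx2 : ∫ ω, (ξ n ω) ^ 2 ∂μ ≤ B ^ 2 := by
      calc ∫ ω, (ξ n ω) ^ 2 ∂μ ≤ ∫ (_ : Ω), B ^ 2 ∂μ := by
            apply integral_mono (by simpa using hintpow 0 2) (integrable_const _)
            intro ω
            show ξ n ω ^ 2 ≤ B ^ 2
            have := hb n ω
            nlinarith [abs_nonneg (ξ n ω), sq_abs (ξ n ω)]
        _ = B ^ 2 := by simp
    have hx4 : ∫ ω, (ξ n ω) ^ 4 ∂μ ≤ B ^ 4 := by
      calc ∫ ω, (ξ n ω) ^ 4 ∂μ ≤ ∫ (_ : Ω), B ^ 4 ∂μ := by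
            apply integral_mono (by simpa using hintpow 0 4) (integrable_const _)
            intro ω
            show ξ n ω ^ 4 ≤ B ^ 4
            have h1 := hb n ω
            have h2 : (ξ n ω)^4 = |ξ n ω|^4 := by rw [← abs_pow, abs_of_nonneg (by positivity)]
            rw [h2]
            exact pow_le_pow_left₀ (abs_nonneg _) h1 4
        _ = B ^ 4 := by simp
    have hs2nn : 0 ≤ ∫ ω, (s ω) ^ 2 ∂μ := integral_nonneg (fun ω => by positivity)
    have hx2nn : 0 ≤ ∫ ω, (ξ n ω) ^ 2 ∂μ := integral_nonneg (fun ω => by positivity)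
    -- expansion
    have hsum : ∀ ω, ∑ i ∈ Finset.range (n+1), ξ i ω = s ω + ξ n ω := by
      intro ω; rw [Finset.sum_range_succ]
    have e2 : ∫ ω, (∑ i ∈ Finset.range (n+1), ξ i ω) ^ 2 ∂μ
        = (∫ ω, (s ω) ^ 2 ∂μ) + (∫ ω, (ξ n ω) ^ 2 ∂μ) := by
      have : ∀ ω, (∑ i ∈ Finset.range (n+1), ξ i ω) ^ 2
          = (s ω) ^ 2 + 2 * ((s ω) ^ 1 * (ξ n ω) ^ 1) + (ξ n ω) ^ 2 := by
        intro ω; rw [hsum ω]; ring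
      simp_rw [this]
      have i20 : Integrable (fun ω => s ω ^ 2) μ := by simpa using hintpow 2 0
      have i11 : Integrable (fun ω => 2 * (s ω ^ 1 * ξ n ω ^ 1)) μ := (hintpow 1 1).const_mul 2
      have i02 : Integrable (fun ω => ξ n ω ^ 2) μ := by simpa using hintpow 0 2
      have i2011 : Integrable (fun ω => s ω ^ 2 + 2 * (s ω ^ 1 * ξ n ω ^ 1)) μ := i20.add i11
      rw [integral_add i2011 i02, integral_add i20 i11, integral_const_mul, hprod 1 1]
      simp [hs0]
    have e4 : ∫ ω, (∑ i ∈ Finset.range (n+1), ξ i ω) ^ 4 ∂μ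
        = (∫ ω, (s ω) ^ 4 ∂μ) + 6 * ((∫ ω, (s ω) ^ 2 ∂μ) * (∫ ω, (ξ n ω) ^ 2 ∂μ))
          + (∫ ω, (ξ n ω) ^ 4 ∂μ) := by
      have : ∀ ω, (∑ i ∈ Finset.range (n+1), ξ i ω) ^ 4
          = (s ω) ^ 4 + 4 * ((s ω) ^ 3 * (ξ n ω) ^ 1) + 6 * ((s ω) ^ 2 * (ξ n ω) ^ 2)
            + 4 * ((s ω) ^ 1 * (ξ n ω) ^ 3) + (ξ n ω) ^ 4 := by
        intro ω; rw [hsum ω]; ring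
      simp_rw [this]
      have i40 : Integrable (fun ω => s ω ^ 4) μ := by simpa using hintpow 4 0
      have i31 : Integrable (fun ω => 4 * (s ω ^ 3 * ξ n ω ^ 1)) μ := (hintpow 3 1).const_mul 4
      have i22 : Integrable (fun ω => 6 * (s ω ^ 2 * ξ n ω ^ 2)) μ := (hintpow 2 2).const_mul 6
      have i13 : Integrable (fun ω => 4 * (s ω ^ 1 * ξ n ω ^ 3)) μ := (hintpow 1 3).const_mul 4
      have i04 : Integrable (fun ω => ξ n ω ^ 4) μ := by simpa using hintpow 0 4
      have iA : Integrable (fun ω => s ω ^ 4 + 4 * (s ω ^ 3 * ξ n ω ^ 1)) μ := i40.add i31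
      have iB : Integrable (fun ω => s ω ^ 4 + 4 * (s ω ^ 3 * ξ n ω ^ 1)
        + 6 * (s ω ^ 2 * ξ n ω ^ 2)) μ := iA.add i22
      have iC : Integrable (fun ω => s ω ^ 4 + 4 * (s ω ^ 3 * ξ n ω ^ 1)
        + 6 * (s ω ^ 2 * ξ n ω ^ 2) + 4 * (s ω ^ 1 * ξ n ω ^ 3)) μ := iB.add i13
      rw [integral_add iC i04,
        integral_add iB i13,
        integral_add iA i22,
        integral_add i40 i31,
        integral_const_mul, integral_const_mul, integral_const_mul,
        hprod 3 1, hprod 1 3, hprod 2 2]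
      simp [hs0, h0 n]
    constructor
    · rw [e2]
      push_cast
      nlinarith [ih.1, hx2]
    · rw [e4]
      push_cast
      nlinarith [ih.1, ih.2, hx2, hx4, hs2nn, hx2nn, sq_nonneg B, sq_nonneg (B^2)]


lemma scalar_geom {T Ns X N : ℝ} (hT0 : 0 ≤ T) (hN : 0 < N)
    (hkey : Ns ^ 2 - X ^ 2 ≤ T ^ 2) (hxle : X ≤ Ns)
    (hXlb : N - T ≤ X) (hub : Ns ≤ N + T) :
    (Ns - X) ^ 2 ≤ 16 * min (T ^ 2) (T ^ 4 / N ^ 2) := by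
  have hD0 : 0 ≤ Ns - X := by linarith
  by_cases hcase : T ≤ N / 2
  · have hXlb2 : N / 2 ≤ X := by linarith
    have hDX : (Ns - X) * X ≤ T ^ 2 := by nlinarith
    have hDN : (Ns - X) * N ≤ 2 * T ^ 2 := by nlinarith
    have hmin : min (T^2) (T^4 / N^2) = T^4 / N^2 := by
      apply min_eq_right
      rw [div_le_iff₀ (by positivity)]
      have h : T^2 ≤ N^2 := by nlinarith
      nlinarith [mul_le_mul_of_nonneg_left h (sq_nonneg T)]
    rw [hmin, ← mul_div_assoc, le_div_iff₀ (by positivity : (0:ℝ) < N^2)]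
    nlinarith [mul_nonneg hD0 hN.le, sq_nonneg (2*T^2 - (Ns - X)*N), sq_nonneg T]
  · push_neg at hcase
    have hD2T : Ns - X ≤ 2 * T := by linarith
    have hmin : T^2 / 4 ≤ min (T^2) (T^4 / N^2) := by
      apply le_min
      · nlinarith
      · rw [le_div_iff₀ (by positivity : (0:ℝ) < N^2)]
        have h : N^2 ≤ 4*T^2 := by nlinarith
        nlinarith [mul_le_mul_of_nonneg_left h (by positivity : (0:ℝ) ≤ T^2/4)]
    calc (Ns - X)^2 ≤ 4 * T^2 := by nlinarith
      _ = 16 * (T^2/4) := by ring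
      _ ≤ 16 * min (T^2) (T^4 / N^2) := by linarith

lemma geom_bound {E : Type*} [NormedAddCommGroup E] [InnerProductSpace ℝ E]
    (a : E) (ha0 : a ≠ 0) (n : ℕ) (hn : 1 ≤ n) (t : E) :
    (‖(n : ℝ) • a + t‖ - (inner ℝ (‖a‖⁻¹ • a) ((n : ℝ) • a + t) : ℝ)) ^ 2
      ≤ 16 * min (‖t‖ ^ 2) (‖t‖ ^ 4 / ((n : ℝ) * ‖a‖) ^ 2) := by
  set c : ℝ := ‖a‖ with hc
  have hc0 : 0 < c := norm_pos_iff.2 ha0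
  set ahat : E := ‖a‖⁻¹ • a with hahat
  have hnorm1 : ‖ahat‖ = 1 := by
    rw [hahat, norm_smul, norm_inv, norm_norm, inv_mul_cancel₀ hc0.ne']
  have haa : a = c • ahat := by
    rw [hahat, smul_smul, mul_inv_cancel₀ hc0.ne', one_smul]
  set s : E := (n : ℝ) • a + t with hs
  set u : ℝ := inner ℝ ahat t with hu
  have hut : |u| ≤ ‖t‖ := by
    calc |u| ≤ ‖ahat‖ * ‖t‖ := abs_real_inner_le_norm _ _
      _ = ‖t‖ := by rw [hnorm1, one_mul]
  have hia : (inner ℝ ahat a : ℝ) = c := by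
    rw [hahat, real_inner_smul_left, real_inner_self_eq_norm_sq]
    rw [hc]; field_simp
  have hxs : (inner ℝ ahat s : ℝ) = n * c + u := by
    rw [hs, inner_add_right, real_inner_smul_right, hia, ← hu]
  have hsplit : s = ((n : ℝ) * c) • ahat + t := by rw [hs, haa, smul_smul]
  have e1 : (inner ℝ (((n:ℝ)*c) • ahat) (((n:ℝ)*c) • ahat) : ℝ) = ((n:ℝ)*c)^2 := by
    rw [real_inner_smul_left, real_inner_smul_right, real_inner_self_eq_norm_sq, hnorm1]
    ring
  have e2 : (inner ℝ (((n:ℝ)*c) • ahat) t : ℝ) = ((n:ℝ)*c) * u := by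
    rw [real_inner_smul_left, ← hu]
  have hs2 : ‖s‖ ^ 2 = ((n:ℝ) * c) ^ 2 + 2 * ((n:ℝ) * c) * u + ‖t‖ ^ 2 := by
    rw [← real_inner_self_eq_norm_sq, hsplit, real_inner_add_add_self, e1, e2,
      real_inner_self_eq_norm_sq]
    ring
  have hxle : (inner ℝ ahat s : ℝ) ≤ ‖s‖ := by
    calc (inner ℝ ahat s : ℝ) ≤ ‖ahat‖ * ‖s‖ := real_inner_le_norm _ _
      _ = ‖s‖ := by rw [hnorm1, one_mul]
  have hN : (0:ℝ) < (n:ℝ) * c := by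
    have : (1:ℝ) ≤ (n:ℝ) := by exact_mod_cast hn
    positivity
  have hub : ‖s‖ ≤ (n:ℝ) * c + ‖t‖ := by
    rw [hs]
    calc ‖(n:ℝ) • a + t‖ ≤ ‖(n:ℝ) • a‖ + ‖t‖ := norm_add_le _ _
      _ = (n:ℝ) * c + ‖t‖ := by rw [norm_smul, Real.norm_natCast, hc]
  have hkey : ‖s‖ ^ 2 - (inner ℝ ahat s : ℝ) ^ 2 ≤ ‖t‖ ^ 2 := by
    rw [hs2, hxs]; nlinarith [sq_nonneg u]
  have hXlb : (n:ℝ) * c - ‖t‖ ≤ (inner ℝ ahat s : ℝ) := by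
    rw [hxs]
    have := neg_abs_le u
    linarith [hut]
  exact scalar_geom (norm_nonneg t) hN hkey hxle hXlb hub

lemma coord_abs_le_norm (v : EuclideanSpace ℝ (Fin 2)) (k : Fin 2) : |v k| ≤ ‖v‖ := by
  rw [EuclideanSpace.norm_eq]
  rw [← Real.sqrt_sq_eq_abs]
  apply Real.sqrt_le_sqrt
  calc v k ^ 2 = ‖v k‖ ^ 2 := by rw [Real.norm_eq_abs, sq_abs]
    _ ≤ ∑ i, ‖v i‖ ^ 2 := Finset.single_le_sum (f := fun i => ‖v i‖ ^ 2) (fun i _ => by positivity) (Finset.mem_univ k)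

lemma norm_sq_eq_coord (v : EuclideanSpace ℝ (Fin 2)) : ‖v‖ ^ 2 = v 0 ^ 2 + v 1 ^ 2 := by
  rw [EuclideanSpace.norm_eq, Real.sq_sqrt (by positivity)]
  simp [Fin.sum_univ_two, Real.norm_eq_abs, sq_abs]

lemma vec_moment4 {Ω : Type*} [MeasurableSpace Ω] (μ : Measure Ω) [IsProbabilityMeasure μ]
    (W : ℕ → Ω → EuclideanSpace ℝ (Fin 2)) (hmW : ∀ i, Measurable (W i))
    (hiW : iIndepFun W μ)
    (B : ℝ) (hB : 0 ≤ B) (hb : ∀ i ω, ‖W i ω‖ ≤ B)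
    (h0 : ∀ i, ∫ ω, W i ω ∂μ = 0) (n : ℕ) :
    ∫ ω, ‖∑ i ∈ Finset.range n, W i ω‖ ^ 4 ∂μ ≤ 12 * n ^ 2 * B ^ 4 := by
  have hcoord : ∀ k : Fin 2,
      ∫ ω, (∑ i ∈ Finset.range n, W i ω k) ^ 4 ∂μ ≤ 3 * n ^ 2 * B ^ 4 := by
    intro k
    refine (moment24 μ (fun i ω => W i ω k) ?_ ?_ B hB ?_ ?_ n).2
    · exact fun i => (EuclideanSpace.proj k).continuous.measurable.comp (hmW i)
    · exact hiW.comp (fun i v => v k) (fun i => (EuclideanSpace.proj (𝕜:=ℝ) k).continuous.measurable)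
    · exact fun i ω => (coord_abs_le_norm _ k).trans (hb i ω)
    · intro i
      have hint : Integrable (W i) μ := by
        apply MeasureTheory.Integrable.mono' (integrable_const B) (hmW i).aestronglyMeasurable
        exact ae_of_all _ (hb i)
      have h := ((EuclideanSpace.proj k (𝕜 := ℝ)).integral_comp_comm hint)
      rw [h0 i] at h
      show ∫ ω, W i ω k ∂μ = 0
      simpa using h
  -- measurability/integrability of coordinate powers
  have hmS : ∀ k : Fin 2, Measurable fun ω => (∑ i ∈ Finset.range n, W i ω k) := by
    intro k
    apply Finset.measurable_sum
    exact fun i _ => (EuclideanSpace.proj k).continuous.measurable.comp (hmW i)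
  have hbS : ∀ k : Fin 2, ∀ ω, |∑ i ∈ Finset.range n, W i ω k| ≤ n * B := by
    intro k ω
    calc |∑ i ∈ Finset.range n, W i ω k| ≤ ∑ i ∈ Finset.range n, |W i ω k| :=
          Finset.abs_sum_le_sum_abs _ _
      _ ≤ ∑ i ∈ Finset.range n, B :=
          Finset.sum_le_sum fun i _ => (coord_abs_le_norm _ k).trans (hb i ω)
      _ = n * B := by simp [mul_comm]
  have hint4 : ∀ k : Fin 2, Integrable (fun ω => (∑ i ∈ Finset.range n, W i ω k) ^ 4) μ := by
    intro k
    refine Integrable.of_abs_bound ((hmS k).pow_const 4) (B := ((n:ℝ)*B)^4) ?_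
    intro ω
    rw [abs_pow]
    exact pow_le_pow_left₀ (abs_nonneg _) (hbS k ω) 4
  have happ : ∀ (ω : Ω) (k : Fin 2), (∑ i ∈ Finset.range n, W i ω) k
      = ∑ i ∈ Finset.range n, W i ω k := by
    intro ω k
    simp
  have hpt : ∀ ω, ‖∑ i ∈ Finset.range n, W i ω‖ ^ 4
      ≤ 2 * (∑ i ∈ Finset.range n, W i ω 0) ^ 4 + 2 * (∑ i ∈ Finset.range n, W i ω 1) ^ 4 := by
    intro ω
    have h2 := norm_sq_eq_coord (∑ i ∈ Finset.range n, W i ω)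
    rw [happ ω 0, happ ω 1] at h2
    have h4 : ‖∑ i ∈ Finset.range n, W i ω‖ ^ 4 = (‖∑ i ∈ Finset.range n, W i ω‖ ^ 2) ^ 2 := by
      ring
    rw [h4, h2]
    nlinarith [sq_nonneg ((∑ i ∈ Finset.range n, W i ω 0) ^ 2
      - (∑ i ∈ Finset.range n, W i ω 1) ^ 2)]
  have hR : Integrable (fun ω => 2 * (∑ i ∈ Finset.range n, W i ω 0) ^ 4
      + 2 * (∑ i ∈ Finset.range n, W i ω 1) ^ 4) μ :=
    ((hint4 0).const_mul 2).add ((hint4 1).const_mul 2)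
  calc ∫ ω, ‖∑ i ∈ Finset.range n, W i ω‖ ^ 4 ∂μ
      ≤ ∫ ω, (2 * (∑ i ∈ Finset.range n, W i ω 0) ^ 4
          + 2 * (∑ i ∈ Finset.range n, W i ω 1) ^ 4) ∂μ := by
        apply integral_mono_of_nonneg (ae_of_all _ fun ω => by positivity) hR
          (ae_of_all _ hpt)
    _ = 2 * ∫ ω, (∑ i ∈ Finset.range n, W i ω 0) ^ 4 ∂μ
        + 2 * ∫ ω, (∑ i ∈ Finset.range n, W i ω 1) ^ 4 ∂μ := by
        rw [integral_add ((hint4 0).const_mul 2) ((hint4 1).const_mul 2),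
          integral_const_mul, integral_const_mul]
    _ ≤ 2 * (3 * n ^ 2 * B ^ 4) + 2 * (3 * n ^ 2 * B ^ 4) := by
        have g0 := hcoord 0
        have g1 := hcoord 1
        have i0nn : (0:ℝ) ≤ 2 := by norm_num
        gcongr
    _ = 12 * n ^ 2 * B ^ 4 := by ring

lemma vec_var {Ω : Type*} [MeasurableSpace Ω] (μ : Measure Ω) [IsProbabilityMeasure μ]
    (W : ℕ → Ω → EuclideanSpace ℝ (Fin 2)) (hmW : ∀ i, Measurable (W i))
    (hiW : iIndepFun W μ)
    (hl2 : ∀ i, MemLp (W i) 2 μ)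
    (h0 : ∀ i, ∫ ω, W i ω ∂μ = 0)
    (hid : ∀ i, IdentDistrib (W i) (W 0) μ μ) (n : ℕ) :
    ∫ ω, ‖∑ i ∈ Finset.range n, W i ω‖ ^ 2 ∂μ ≤ n * ∫ ω, ‖W 0 ω‖ ^ 2 ∂μ := by
  have hmk : ∀ (i : ℕ) (k : Fin 2), Measurable (fun ω => W i ω k) :=
    fun i k => (EuclideanSpace.proj (𝕜:=ℝ) k).continuous.measurable.comp (hmW i)
  have hl2k : ∀ (i : ℕ) (k : Fin 2), MemLp (fun ω => W i ω k) 2 μ := by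
    intro i k
    refine (hl2 i).of_le (hmk i k).aestronglyMeasurable (ae_of_all _ fun ω => ?_)
    rw [Real.norm_eq_abs]
    exact coord_abs_le_norm _ k
  have h0k : ∀ (i : ℕ) (k : Fin 2), ∫ ω, W i ω k ∂μ = 0 := by
    intro i k
    have h := ((EuclideanSpace.proj k (𝕜 := ℝ)).integral_comp_comm
      ((hl2 i).integrable one_le_two))
    rw [h0 i] at h
    simpa using h
  have hvar : ∀ (i : ℕ) (k : Fin 2),
      variance (fun ω => W i ω k) μ = ∫ ω, (W 0 ω k) ^ 2 ∂μ := by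
    intro i k
    have hident : IdentDistrib (fun ω => W i ω k) (fun ω => W 0 ω k) μ μ :=
      (hid i).comp (EuclideanSpace.proj (𝕜:=ℝ) k).continuous.measurable
    rw [hident.variance_eq, variance_eq_sub (hl2k 0 k), h0k 0 k]
    simp
  have hsumvar : ∀ k : Fin 2,
      ∫ ω, (∑ i ∈ Finset.range n, W i ω k) ^ 2 ∂μ = n * ∫ ω, (W 0 ω k) ^ 2 ∂μ := by
    intro k
    have hXsum : (fun ω => ∑ i ∈ Finset.range n, W i ω k)
        = ∑ i ∈ Finset.range n, (fun ω => W i ω k) := by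
      ext ω; simp
    have hml2 : MemLp (∑ i ∈ Finset.range n, fun ω => W i ω k) 2 μ :=
      memLp_finset_sum' _ (fun i _ => hl2k i k)
    have hpair : Set.Pairwise ↑(Finset.range n)
        (fun i j => IndepFun (fun ω => W i ω k) (fun ω => W j ω k) μ) := by
      intro i _ j _ hij
      exact (hiW.comp (fun i v => v k)
        (fun i => (EuclideanSpace.proj (𝕜:=ℝ) k).continuous.measurable)).indepFun hij
    have hvs := IndepFun.variance_sum (μ := μ) (X := fun i => fun ω => W i ω k)
      (s := Finset.range n) (fun i _ => hl2k i k) hpair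
    have hmean : (μ[(∑ i ∈ Finset.range n, fun ω => W i ω k)]) = 0 := by
      have hptw : ∀ ω, (∑ i ∈ Finset.range n, (fun ω' => W i ω' k)) ω
          = ∑ i ∈ Finset.range n, W i ω k := by intro ω; simp
      show ∫ ω, (∑ i ∈ Finset.range n, (fun ω' => W i ω' k)) ω ∂μ = 0
      simp_rw [hptw]
      rw [integral_finset_sum _ (fun i _ => ((hl2k i k).integrable one_le_two))]
      exact Finset.sum_eq_zero fun i _ => h0k i k
    have hXeq : ∫ ω, (∑ i ∈ Finset.range n, W i ω k) ^ 2 ∂μ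
        = μ[(∑ i ∈ Finset.range n, fun ω => W i ω k) ^ 2] := by
      apply integral_congr_ae
      apply ae_of_all
      intro ω
      simp
    have hA : (μ[(∑ i ∈ Finset.range n, fun ω => W i ω k) ^ 2] : ℝ)
        - (μ[(∑ i ∈ Finset.range n, fun ω => W i ω k)]) ^ 2
        = ∑ i ∈ Finset.range n, variance (fun ω => W i ω k) μ :=
      (variance_eq_sub hml2).symm.trans hvs
    rw [Finset.sum_congr rfl (fun i _ => hvar i k), Finset.sum_const,
      Finset.card_range, nsmul_eq_mul] at hA
    have hz : (μ[(∑ i ∈ Finset.range n, fun ω => W i ω k)] : ℝ) ^ 2 = 0 := by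
      rw [hmean]; ring
    rw [hXeq]
    linarith [hA, hz]
  -- combine coordinates
  have happ : ∀ (ω : Ω) (k : Fin 2), (∑ i ∈ Finset.range n, W i ω) k
      = ∑ i ∈ Finset.range n, W i ω k :=
    fun ω k => by simp
  have hintk : ∀ k : Fin 2, Integrable (fun ω => (∑ i ∈ Finset.range n, W i ω k) ^ 2) μ := by
    intro k
    have := (memLp_finset_sum' (μ := μ) (Finset.range n) (fun i (_ : i ∈ Finset.range n) => hl2k i k)).integrable_sq
    apply this.congr
    apply ae_of_all
    intro ω
    simp
  have hint0 : ∀ k : Fin 2, Integrable (fun ω => (W 0 ω k) ^ 2) μ := by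
    intro k
    have := (hl2k 0 k).integrable_sq
    apply this.congr
    apply ae_of_all
    intro ω
    simp
  have hpt : ∀ ω, ‖∑ i ∈ Finset.range n, W i ω‖ ^ 2
      = (∑ i ∈ Finset.range n, W i ω 0) ^ 2 + (∑ i ∈ Finset.range n, W i ω 1) ^ 2 := by
    intro ω; rw [norm_sq_eq_coord, happ ω 0, happ ω 1]
  have h0pt : ∀ ω, ‖W 0 ω‖ ^ 2 = (W 0 ω 0) ^ 2 + (W 0 ω 1) ^ 2 := fun ω =>
    norm_sq_eq_coord _
  apply le_of_eq
  calc ∫ ω, ‖∑ i ∈ Finset.range n, W i ω‖ ^ 2 ∂μ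
      = ∫ ω, ((∑ i ∈ Finset.range n, W i ω 0) ^ 2
          + (∑ i ∈ Finset.range n, W i ω 1) ^ 2) ∂μ := by
        apply integral_congr_ae (ae_of_all _ fun ω => hpt ω)
    _ = (∫ ω, (∑ i ∈ Finset.range n, W i ω 0) ^ 2 ∂μ)
        + ∫ ω, (∑ i ∈ Finset.range n, W i ω 1) ^ 2 ∂μ := integral_add (hintk 0) (hintk 1)
    _ = n * ∫ ω, (W 0 ω 0) ^ 2 ∂μ + n * ∫ ω, (W 0 ω 1) ^ 2 ∂μ := by
        rw [hsumvar 0, hsumvar 1]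
    _ = n * ∫ ω, ((W 0 ω 0) ^ 2 + (W 0 ω 1) ^ 2) ∂μ := by
        rw [integral_add (hint0 0) (hint0 1)]; ring
    _ = n * ∫ ω, ‖W 0 ω‖ ^ 2 ∂μ := by
        congr 1
        apply integral_congr_ae (ae_of_all _ fun ω => (h0pt ω).symm)

lemma minsplit_aux {T p q N : ℝ} (hT0 : 0 ≤ T) (hp : 0 ≤ p) (hq : 0 ≤ q) (hN : 0 < N)
    (hTpq : T ≤ p + q) :
    min (T ^ 2) (T ^ 4 / N ^ 2) ≤ 4 * q ^ 2 + 16 * p ^ 4 / N ^ 2 := by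
  by_cases h : T ≤ 2 * q
  · have h1 : min (T ^ 2) (T ^ 4 / N ^ 2) ≤ T ^ 2 := min_le_left _ _
    have h2 : T ^ 2 ≤ 4 * q ^ 2 := by nlinarith
    have h3 : (0:ℝ) ≤ 16 * p ^ 4 / N ^ 2 := by positivity
    linarith
  · push_neg at h
    have hTp : T ≤ 2 * p := by linarith
    have h1 : min (T ^ 2) (T ^ 4 / N ^ 2) ≤ T ^ 4 / N ^ 2 := min_le_right _ _
    have hsq : T ^ 2 ≤ 4 * p ^ 2 := by nlinarith
    have h4 : T ^ 4 ≤ 16 * p ^ 4 := by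
      nlinarith [mul_le_mul hsq hsq (by positivity : (0:ℝ) ≤ T ^ 2) (by positivity : (0:ℝ) ≤ 4 * p ^ 2)]
    have h5 : T ^ 4 / N ^ 2 ≤ 16 * p ^ 4 / N ^ 2 := by gcongr
    have h6 : (0:ℝ) ≤ 4 * q ^ 2 := by positivity
    linarith

/-- For an i.i.d. planar random walk with `E[‖Z‖²] < ∞` and nonzero
mean vector `a`, setting `â := a/‖a‖`, we have `E[(‖S n‖ − âᵀ S n)²]/n → 0`. -/
theorem norm_minus_projection_L2
    {Ω : Type*} [MeasurableSpace Ω] (μ : Measure Ω) [IsProbabilityMeasure μ]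
    (Z : ℕ → Ω → EuclideanSpace ℝ (Fin 2))
    (hmeas : ∀ i, Measurable (Z i))
    (hindep : iIndepFun Z μ)
    (hident : ∀ i, IdentDistrib (Z i) (Z 0) μ μ)
    (hL2 : Integrable (fun ω => ‖Z 0 ω‖ ^ 2) μ)
    (a : EuclideanSpace ℝ (Fin 2)) (ha : a = ∫ ω, Z 0 ω ∂μ) (ha0 : a ≠ 0)
    (ahat : EuclideanSpace ℝ (Fin 2)) (hahat : ahat = ‖a‖⁻¹ • a)
    (S : ℕ → Ω → EuclideanSpace ℝ (Fin 2))
    (hS : ∀ n ω, S n ω = ∑ i ∈ Finset.range n, Z i ω) :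
    Tendsto (fun n : ℕ => (∫ ω, (‖S n ω‖ - (inner ℝ ahat (S n ω) : ℝ)) ^ 2 ∂μ) / n)
      atTop (nhds 0) := by
  classical
  have hc0 : 0 < ‖a‖ := norm_pos_iff.2 ha0
  -- L² membership
  have hZ0m : MemLp (Z 0) 2 μ :=
    (memLp_two_iff_integrable_sq_norm (hmeas 0).aestronglyMeasurable).2 hL2
  have hZm : ∀ i, MemLp (Z i) 2 μ := fun i => ((hident i).memLp_iff).2 hZ0m
  -- centered variables
  set Y : ℕ → Ω → EuclideanSpace ℝ (Fin 2) := fun i ω => Z i ω - a with hYdef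
  have hYmeas : ∀ i, Measurable (Y i) := fun i => (hmeas i).sub measurable_const
  have hYm : ∀ i, MemLp (Y i) 2 μ := fun i => (hZm i).sub (memLp_const a)
  have hYid : ∀ i, IdentDistrib (Y i) (Y 0) μ μ := fun i =>
    (hident i).comp (measurable_id.sub measurable_const)
  have hY0int : Integrable (Y 0) μ := (hYm 0).integrable one_le_two
  have hYint : ∀ i, Integrable (Y i) μ := fun i => (hYm i).integrable one_le_two
  have hYmean0 : ∫ ω, Y 0 ω ∂μ = 0 := by
    show ∫ ω, (Z 0 ω - a) ∂μ = 0
    rw [integral_sub ((hZm 0).integrable one_le_two) (integrable_const a)]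
    simp [← ha]
  have hYmean : ∀ i, ∫ ω, Y i ω ∂μ = 0 := fun i => ((hYid i).integral_eq).trans hYmean0
  -- truncation
  set g : ℝ → EuclideanSpace ℝ (Fin 2) → EuclideanSpace ℝ (Fin 2) :=
    fun K v => if ‖v‖ ≤ K then v else 0 with hgdef
  have hgmeas : ∀ K, Measurable (g K) := by
    intro K
    exact Measurable.ite (measurableSet_le measurable_norm measurable_const)
      measurable_id measurable_const
  have hgnorm : ∀ K v, ‖g K v‖ ≤ ‖v‖ := by
    intro K v
    show ‖if ‖v‖ ≤ K then v else 0‖ ≤ ‖v‖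
    split
    · exact le_refl _
    · simp
  have hgK : ∀ (K : ℝ) (v), 0 ≤ K → ‖g K v‖ ≤ K := by
    intro K v hK
    show ‖if ‖v‖ ≤ K then v else 0‖ ≤ K
    split
    · assumption
    · simpa
  have hgint : ∀ (K : ℝ) (i), Integrable (fun ω => g K (Y i ω)) μ := by
    intro K i
    refine Integrable.mono' (hYint i).norm
      ((hgmeas K).comp (hYmeas i)).aestronglyMeasurable ?_
    exact ae_of_all _ fun ω => hgnorm K (Y i ω)
  set mv : ℝ → EuclideanSpace ℝ (Fin 2) := fun K => ∫ ω, g K (Y 0 ω) ∂μ with hmvdef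
  set C0 : ℝ := ∫ ω, ‖Y 0 ω‖ ∂μ with hC0def
  have hmvb : ∀ K, ‖mv K‖ ≤ C0 := by
    intro K
    calc ‖mv K‖ ≤ ∫ ω, ‖g K (Y 0 ω)‖ ∂μ := norm_integral_le_integral_norm _
      _ ≤ ∫ ω, ‖Y 0 ω‖ ∂μ :=
        integral_mono ((hgint K 0).norm) (hY0int.norm) (fun ω => hgnorm K _)
  -- convergence of truncation error
  set Vfun : ℝ → ℕ → Ω → EuclideanSpace ℝ (Fin 2) :=
    fun K i ω => Y i ω - (g K (Y i ω) - mv K) with hVfdef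
  have hVmeas : ∀ K i, Measurable (Vfun K i) := fun K i =>
    (hYmeas i).sub (((hgmeas K).comp (hYmeas i)).sub measurable_const)
  set δf : ℝ → ℝ := fun K => ∫ ω, ‖Vfun K 0 ω‖ ^ 2 ∂μ with hδdef
  have hδnn : ∀ K, 0 ≤ δf K := fun K => integral_nonneg (fun ω => by positivity)
  have hmv0 : Tendsto (fun j : ℕ => mv (j : ℝ)) atTop (nhds 0) := by
    have h := tendsto_integral_of_dominated_convergence (μ := μ)
      (F := fun (j : ℕ) ω => g (j : ℝ) (Y 0 ω)) (f := Y 0) (bound := fun ω => ‖Y 0 ω‖)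
      (fun j => (((hgmeas _).comp (hYmeas 0)).aestronglyMeasurable))
      (hY0int.norm)
      (fun j => ae_of_all _ fun ω => hgnorm _ _)
      (ae_of_all _ (fun ω => ?_))
    · rw [hYmean0] at h
      exact h
    · apply tendsto_const_nhds.congr'
      filter_upwards [eventually_ge_atTop ⌈‖Y 0 ω‖⌉₊] with j hj
      have : ‖Y 0 ω‖ ≤ (j : ℝ) := le_trans (Nat.le_ceil _) (by exact_mod_cast hj)
      show Y 0 ω = g (j:ℝ) (Y 0 ω)
      simp only [hgdef]
      rw [if_pos this]
  have hδ0 : Tendsto (fun j : ℕ => δf (j : ℝ)) atTop (nhds 0) := by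
    have hbound : Integrable (fun ω => (2 * ‖Y 0 ω‖ + C0) ^ 2) μ := by
      have hsq : MemLp (fun ω => 2 * ‖Y 0 ω‖ + C0) 2 μ :=
        (((hYm 0).norm.const_mul 2).add (memLp_const C0))
      have := hsq.integrable_sq
      apply this.congr
      exact ae_of_all _ fun ω => by simp [sq]
    have h := tendsto_integral_of_dominated_convergence (μ := μ)
      (F := fun (j : ℕ) ω => ‖Vfun (j : ℝ) 0 ω‖ ^ 2) (f := fun _ => (0:ℝ))
      (bound := fun ω => (2 * ‖Y 0 ω‖ + C0) ^ 2)
      (fun j => (((hVmeas _ 0).norm.pow_const 2).aestronglyMeasurable))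
      hbound
      (fun j => ae_of_all _ fun ω => ?_)
      (ae_of_all _ (fun ω => ?_))
    · simpa using h
    · have h1 : ‖Vfun (j:ℝ) 0 ω‖ ≤ 2 * ‖Y 0 ω‖ + C0 := by
        calc ‖Vfun (j:ℝ) 0 ω‖ ≤ ‖Y 0 ω‖ + (‖g (j:ℝ) (Y 0 ω)‖ + ‖mv (j:ℝ)‖) := by
              refine (norm_sub_le _ _).trans ?_
              gcongr
              exact norm_sub_le _ _
          _ ≤ 2 * ‖Y 0 ω‖ + C0 := by
              have := hgnorm (j:ℝ) (Y 0 ω)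
              have := hmvb (j:ℝ)
              linarith
      have h2 : (0:ℝ) ≤ 2 * ‖Y 0 ω‖ + C0 := le_trans (norm_nonneg _) h1
      rw [Real.norm_eq_abs, abs_pow, sq_abs]
      exact pow_le_pow_left₀ (norm_nonneg _) h1 2
    · -- pointwise convergence of ‖Vfun j 0 ω‖^2 to 0
      have hV : Tendsto (fun j : ℕ => Vfun (j:ℝ) 0 ω) atTop (nhds 0) := by
        have hpart1 : Tendsto (fun j : ℕ => Y 0 ω - g (j:ℝ) (Y 0 ω)) atTop (nhds 0) := by
          apply tendsto_const_nhds.congr'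
          filter_upwards [eventually_ge_atTop ⌈‖Y 0 ω‖⌉₊] with j hj
          have : ‖Y 0 ω‖ ≤ (j : ℝ) := le_trans (Nat.le_ceil _) (by exact_mod_cast hj)
          show (0 : EuclideanSpace ℝ (Fin 2)) = Y 0 ω - g (j:ℝ) (Y 0 ω)
          simp only [hgdef]
          rw [if_pos this]
          simp
        have : Tendsto (fun j : ℕ => (Y 0 ω - g (j:ℝ) (Y 0 ω)) + mv (j:ℝ)) atTop
            (nhds (0 + 0)) := hpart1.add hmv0
        rw [add_zero] at this
        apply this.congr
        intro j
        show Y 0 ω - g (j:ℝ) (Y 0 ω) + mv (j:ℝ) = Vfun (j:ℝ) 0 ω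
        simp only [hVfdef]
        abel
      have := (hV.norm.pow 2)
      simpa using this
  -- the limit statement
  refine tendsto_order.2 ⟨fun b hb => ?_, fun ε hε => ?_⟩
  · -- lower bound : values are nonnegative
    apply Filter.Eventually.of_forall
    intro n
    have h1 : 0 ≤ ∫ ω, (‖S n ω‖ - (inner ℝ ahat (S n ω) : ℝ)) ^ 2 ∂μ :=
      integral_nonneg fun ω => by positivity
    have : (0:ℝ) ≤ (∫ ω, (‖S n ω‖ - (inner ℝ ahat (S n ω) : ℝ)) ^ 2 ∂μ) / n :=
      div_nonneg h1 (Nat.cast_nonneg n)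
    linarith
  · -- upper bound
    obtain ⟨j0, hj0⟩ : ∃ j : ℕ, δf (j:ℝ) < ε/128 :=
      (hδ0.eventually_lt_const (by positivity : (0:ℝ) < ε/128)).exists
    set K : ℝ := (j0 : ℝ) with hKdef
    have hK0 : 0 ≤ K := Nat.cast_nonneg j0
    have hmvK : ‖mv K‖ ≤ K := by
      calc ‖mv K‖ ≤ ∫ ω, ‖g K (Y 0 ω)‖ ∂μ := norm_integral_le_integral_norm _
        _ ≤ ∫ (_ : Ω), K ∂μ :=
            integral_mono ((hgint K 0).norm) (integrable_const K)
              (fun ω => hgK K _ hK0)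
        _ = K := by simp
    set U : ℕ → Ω → EuclideanSpace ℝ (Fin 2) := fun i ω => g K (Y i ω) - mv K with hUdef
    set V : ℕ → Ω → EuclideanSpace ℝ (Fin 2) := Vfun K with hVdef2
    set δ : ℝ := δf K with hδKdef
    have hδε : δ < ε/128 := hj0
    have hδnn' : 0 ≤ δ := hδnn K
    have hUmeas : ∀ i, Measurable (U i) := fun i =>
      ((hgmeas K).comp (hYmeas i)).sub measurable_const
    have hUb : ∀ i ω, ‖U i ω‖ ≤ 2*K := by
      intro i ω
      calc ‖U i ω‖ ≤ ‖g K (Y i ω)‖ + ‖mv K‖ := norm_sub_le _ _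
        _ ≤ K + K := add_le_add (hgK K _ hK0) hmvK
        _ = 2*K := by ring
    have hΦmeas : Measurable (fun z : EuclideanSpace ℝ (Fin 2) => g K (z - a) - mv K) :=
      ((hgmeas K).comp (measurable_id.sub measurable_const)).sub measurable_const
    have hUindep : iIndepFun U μ :=
      hindep.comp (fun _ z => g K (z - a) - mv K) (fun _ => hΦmeas)
    have hUid : ∀ i, IdentDistrib (U i) (U 0) μ μ := fun i => (hident i).comp hΦmeas
    have hUint : ∀ i, Integrable (U i) μ := fun i =>
      Integrable.mono' (integrable_const (2*K)) (hUmeas i).aestronglyMeasurable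
        (ae_of_all _ (hUb i))
    have hU00 : ∫ ω, U 0 ω ∂μ = 0 := by
      show ∫ ω, (g K (Y 0 ω) - mv K) ∂μ = 0
      rw [integral_sub (hgint K 0) (integrable_const _), integral_const]
      simp [hmvdef]
    have hU0 : ∀ i, ∫ ω, U i ω ∂μ = 0 := fun i => ((hUid i).integral_eq).trans hU00
    have hUmem : ∀ i, MemLp (U i) 2 μ := fun i =>
      MemLp.of_bound (hUmeas i).aestronglyMeasurable (2*K) (ae_of_all _ (hUb i))
    have hVmeas' : ∀ i, Measurable (V i) := fun i => hVmeas K i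
    have hVm : ∀ i, MemLp (V i) 2 μ := fun i => (hYm i).sub (hUmem i)
    have hΨmeas : Measurable
        (fun z : EuclideanSpace ℝ (Fin 2) => (z - a) - (g K (z - a) - mv K)) :=
      (measurable_id.sub measurable_const).sub hΦmeas
    have hVindep : iIndepFun V μ :=
      hindep.comp (fun _ z => (z - a) - (g K (z - a) - mv K)) (fun _ => hΨmeas)
    have hVid : ∀ i, IdentDistrib (V i) (V 0) μ μ := fun i => (hident i).comp hΨmeas
    have hV0 : ∀ i, ∫ ω, V i ω ∂μ = 0 := by
      intro i
      show ∫ ω, (Y i ω - (g K (Y i ω) - mv K)) ∂μ = 0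
      have hUi : Integrable (fun ω => g K (Y i ω) - mv K) μ :=
        (hgint K i).sub (integrable_const _)
      rw [integral_sub (hYint i) hUi, hYmean i]
      have : ∫ ω, (g K (Y i ω) - mv K) ∂μ = 0 := hU0 i
      rw [this]
      simp
    have hP4 : ∀ n : ℕ, ∫ ω, ‖∑ i ∈ Finset.range n, U i ω‖ ^ 4 ∂μ
        ≤ 12 * n ^ 2 * (2*K) ^ 4 :=
      vec_moment4 μ U hUmeas hUindep (2*K) (by positivity) hUb hU0
    have hQ2 : ∀ n : ℕ, ∫ ω, ‖∑ i ∈ Finset.range n, V i ω‖ ^ 2 ∂μ ≤ n * δ :=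
      vec_var μ V hVmeas' hVindep hVm hV0 hVid
    -- master estimate
    have hmaster : ∀ n : ℕ, 1 ≤ n →
        (∫ ω, (‖S n ω‖ - (inner ℝ ahat (S n ω) : ℝ)) ^ 2 ∂μ)
          ≤ 64 * (n * δ) + 3072 * (2*K) ^ 4 / ‖a‖ ^ 2 := by
      intro n hn
      have hnpos : (0:ℝ) < (n:ℝ) := by exact_mod_cast hn
      set N : ℝ := (n:ℝ) * ‖a‖ with hNdef
      have hNpos : 0 < N := by positivity
      have hdecomp : ∀ ω, S n ω = (n:ℝ) • a + (∑ i ∈ Finset.range n, Y i ω) := by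
        intro ω
        rw [hS n ω]
        have : ∀ i ∈ Finset.range n, Z i ω = (Y i ω) + a := by
          intro i _
          show Z i ω = (Z i ω - a) + a
          abel
        rw [Finset.sum_congr rfl this, Finset.sum_add_distrib, Finset.sum_const,
          Finset.card_range]
        rw [← Nat.cast_smul_eq_nsmul ℝ]
        abel
      have hTPQ : ∀ ω, (∑ i ∈ Finset.range n, Y i ω)
          = (∑ i ∈ Finset.range n, U i ω) + (∑ i ∈ Finset.range n, V i ω) := by
        intro ω
        rw [← Finset.sum_add_distrib]
        apply Finset.sum_congr rfl
        intro i _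
        show Y i ω = (g K (Y i ω) - mv K) + (Y i ω - (g K (Y i ω) - mv K))
        abel
      have hpt : ∀ ω, (‖S n ω‖ - (inner ℝ ahat (S n ω) : ℝ)) ^ 2
          ≤ 64 * ‖∑ i ∈ Finset.range n, V i ω‖ ^ 2
            + 256 * ‖∑ i ∈ Finset.range n, U i ω‖ ^ 4 / N ^ 2 := by
        intro ω
        rw [hahat, hdecomp ω]
        refine (geom_bound a ha0 n hn _).trans ?_
        have h2 := minsplit_aux (norm_nonneg (∑ i ∈ Finset.range n, Y i ω))
          (norm_nonneg (∑ i ∈ Finset.range n, U i ω))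
          (norm_nonneg (∑ i ∈ Finset.range n, V i ω)) hNpos
          (by rw [hTPQ ω]; exact norm_add_le _ _)
        calc 16 * min (‖∑ i ∈ Finset.range n, Y i ω‖ ^ 2)
              (‖∑ i ∈ Finset.range n, Y i ω‖ ^ 4 / N ^ 2)
            ≤ 16 * (4 * ‖∑ i ∈ Finset.range n, V i ω‖ ^ 2
              + 16 * ‖∑ i ∈ Finset.range n, U i ω‖ ^ 4 / N ^ 2) := by linarith
          _ = 64 * ‖∑ i ∈ Finset.range n, V i ω‖ ^ 2
              + 256 * ‖∑ i ∈ Finset.range n, U i ω‖ ^ 4 / N ^ 2 := by ring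
      have hQmem : MemLp (fun ω => ∑ i ∈ Finset.range n, V i ω) 2 μ := by
        have h1 := memLp_finset_sum' (μ := μ) (Finset.range n)
          (fun i (_ : i ∈ Finset.range n) => hVm i)
        have h2 : (∑ i ∈ Finset.range n, V i) = (fun ω => ∑ i ∈ Finset.range n, V i ω) := by
          ext ω; simp
        rwa [h2] at h1
      have hQint : Integrable (fun ω => ‖∑ i ∈ Finset.range n, V i ω‖ ^ 2) μ :=
        (memLp_two_iff_integrable_sq_norm hQmem.aestronglyMeasurable).1 hQmem
      have hPmeas : Measurable (fun ω => ∑ i ∈ Finset.range n, U i ω) :=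
        Finset.measurable_sum _ (fun i _ => hUmeas i)
      have hPb : ∀ ω, ‖∑ i ∈ Finset.range n, U i ω‖ ≤ n * (2*K) := by
        intro ω
        calc ‖∑ i ∈ Finset.range n, U i ω‖ ≤ ∑ i ∈ Finset.range n, ‖U i ω‖ :=
              norm_sum_le _ _
          _ ≤ ∑ i ∈ Finset.range n, (2*K) := Finset.sum_le_sum fun i _ => hUb i ω
          _ = n * (2*K) := by simp [mul_comm]
      have hPint : Integrable (fun ω => ‖∑ i ∈ Finset.range n, U i ω‖ ^ 4) μ := by
        refine Integrable.mono' (integrable_const (((n:ℝ) * (2*K)) ^ 4))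
          ((hPmeas.norm.pow_const 4).aestronglyMeasurable) (ae_of_all _ fun ω => ?_)
        rw [Real.norm_eq_abs, abs_pow, abs_norm]
        exact pow_le_pow_left₀ (norm_nonneg _) (hPb ω) 4
      have hRint : Integrable (fun ω => 64 * ‖∑ i ∈ Finset.range n, V i ω‖ ^ 2
          + 256 * ‖∑ i ∈ Finset.range n, U i ω‖ ^ 4 / N ^ 2) μ := by
        apply (hQint.const_mul 64).add
        have := (hPint.const_mul 256).div_const (N ^ 2)
        apply this.congr
        apply ae_of_all
        intro ω
        rfl
      calc (∫ ω, (‖S n ω‖ - (inner ℝ ahat (S n ω) : ℝ)) ^ 2 ∂μ)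
          ≤ ∫ ω, (64 * ‖∑ i ∈ Finset.range n, V i ω‖ ^ 2
            + 256 * ‖∑ i ∈ Finset.range n, U i ω‖ ^ 4 / N ^ 2) ∂μ :=
            integral_mono_of_nonneg (ae_of_all _ fun ω => by positivity) hRint
              (ae_of_all _ hpt)
        _ = 64 * (∫ ω, ‖∑ i ∈ Finset.range n, V i ω‖ ^ 2 ∂μ)
            + 256 * (∫ ω, ‖∑ i ∈ Finset.range n, U i ω‖ ^ 4 ∂μ) / N ^ 2 := by
            have hdiv : ∀ ω, 256 * ‖∑ i ∈ Finset.range n, U i ω‖ ^ 4 / N ^ 2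
                = (256 / N ^ 2) * ‖∑ i ∈ Finset.range n, U i ω‖ ^ 4 := by
              intro ω; ring
            simp_rw [hdiv]
            rw [integral_add (hQint.const_mul 64) (hPint.const_mul (256 / N^2)),
              integral_const_mul, integral_const_mul]
            ring
        _ ≤ 64 * (n * δ) + 256 * (12 * n ^ 2 * (2*K) ^ 4) / N ^ 2 := by
            have h1 := hQ2 n
            have h2 := hP4 n
            have hiPnn : 0 ≤ ∫ ω, ‖∑ i ∈ Finset.range n, U i ω‖ ^ 4 ∂μ :=
              integral_nonneg fun ω => by positivity
            gcongr
        _ = 64 * (n * δ) + 3072 * (2*K) ^ 4 / ‖a‖ ^ 2 := by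
            rw [hNdef]
            field_simp
            ring
    -- conclude
    have hC : Tendsto (fun n : ℕ => (3072 * (2*K) ^ 4 / ‖a‖ ^ 2) / n) atTop (nhds 0) :=
      tendsto_const_div_atTop_nhds_zero_nat _
    filter_upwards [eventually_ge_atTop 1,
      hC.eventually_lt_const (by positivity : (0:ℝ) < ε/2)] with n hn hCn
    have hnpos : (0:ℝ) < (n:ℝ) := by exact_mod_cast hn
    have h1 := hmaster n hn
    have h2 : (∫ ω, (‖S n ω‖ - (inner ℝ ahat (S n ω) : ℝ)) ^ 2 ∂μ) / n
        ≤ (64 * (n * δ) + 3072 * (2*K) ^ 4 / ‖a‖ ^ 2) / n := by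
      gcongr
    have h3 : (64 * ((n:ℝ) * δ) + 3072 * (2*K) ^ 4 / ‖a‖ ^ 2) / n
        = 64 * δ + (3072 * (2*K) ^ 4 / ‖a‖ ^ 2) / n := by
      field_simp
    have h4 : 64 * δ < ε / 2 := by linarith
    calc (∫ ω, (‖S n ω‖ - (inner ℝ ahat (S n ω) : ℝ)) ^ 2 ∂μ) / n
        ≤ 64 * δ + (3072 * (2*K) ^ 4 / ‖a‖ ^ 2) / n := by rw [← h3]; exact h2
      _ < ε / 2 + ε / 2 := by
          apply add_lt_add h4 hCn
      _ = ε := by ring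
end

section
/- Let u_1, …, u_m ∈ ℝ² with m ≥ 3 be pairwise distinct points, each of which is an extreme point of C := conv{u_1, …, u_m}, and let A := {(i, j) : 1 ≤ i < j ≤ m, ‖u_i − u_j‖ = diam C}. Then there exist constants B, δ_0 ∈ (0, ∞) such that for every δ ∈ (0, δ_0) and every pair x, y ∈ C with ‖x − y‖ > diam C − δ, there exists (i, j) ∈ A such that either max(‖x − u_i‖, ‖y − u_j‖) < Bδ or max(‖y − u_i‖, ‖x − u_j‖) < Bδ. -/
open Metric Finset RealInnerProductSpace

local notation "E2" => EuclideanSpace ℝ (Fin 2)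

lemma my_repr_of_mem {m : ℕ} {u : Fin m → E2} {x : E2}
    (hx : x ∈ convexHull ℝ (Set.range u)) :
    ∃ w : Fin m → ℝ, (∀ k, 0 ≤ w k) ∧ ∑ k, w k = 1 ∧ ∑ k, w k • u k = x := by
  rw [convexHull_range_eq_exists_affineCombination] at hx
  obtain ⟨s, w, hw0, hw1, hws⟩ := hx
  refine ⟨fun k => if k ∈ s then w k else 0, fun k => ?_, ?_, ?_⟩
  · dsimp only; split
    · exact hw0 _ ‹_›
    · exact le_refl 0
  · simpa using (Finset.sum_ite_mem Finset.univ s w).trans (by rw [Finset.univ_inter, hw1])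
  · rw [Finset.affineCombination_eq_linear_combination s u w hw1] at hws
    rw [← hws]
    simp only [ite_smul, zero_smul]
    exact (Finset.sum_ite_mem Finset.univ s (fun k => w k • u k)).trans
      (by rw [Finset.univ_inter])

lemma my_cone_ineq {m : ℕ} {u : Fin m → E2} {C : Set E2}
    (hC : C = convexHull ℝ (Set.range u)) (hbd : Bornology.IsBounded C)
    (hDpos : 0 < Metric.diam C)
    {g : ℝ} (hgpos : 0 < g)
    (hg : ∀ k l : Fin m, u k ≠ u l → g ≤ ‖u k - u l‖ ^ 2 / 2)
    {i j : Fin m} (hij : ‖u i - u j‖ = Metric.diam C) {x : E2} (hx : x ∈ C) :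
    ⟪u i - u j, x - u i⟫ ≤ -(g / Metric.diam C) * ‖x - u i‖ := by
  classical
  set D := Metric.diam C with hD
  have hu : ∀ k, u k ∈ C := fun k => hC ▸ subset_convexHull ℝ _ ⟨k, rfl⟩
  have hDk : ∀ a b : E2, a ∈ C → b ∈ C → ‖a - b‖ ≤ D := by
    intro a b ha hb
    rw [← dist_eq_norm]
    exact dist_le_diam_of_mem hbd ha hb
  have hvert : ∀ k, ⟪u i - u j, u k - u i⟫ ≤ -(‖u k - u i‖ ^ 2 / 2) := by
    intro k
    have h1 : ‖u k - u j‖ ≤ D := hDk _ _ (hu k) (hu j)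
    have h2 : u k - u j = (u i - u j) + (u k - u i) := by abel
    have h3 := norm_add_sq_real (u i - u j) (u k - u i)
    rw [← h2, hij] at h3
    nlinarith [norm_nonneg (u k - u j), norm_nonneg (u k - u i)]
  have hvertg : ∀ k, u k ≠ u i → ⟪u i - u j, u k - u i⟫ ≤ -g := by
    intro k hk
    have := hg k i hk
    linarith [hvert k]
  obtain ⟨w, hw0, hw1, hwx⟩ := my_repr_of_mem (hC ▸ hx)
  have key : x - u i = ∑ k, w k • (u k - u i) := by
    simp only [smul_sub]
    rw [Finset.sum_sub_distrib, ← Finset.sum_smul, hw1, hwx, one_smul]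
  set W : ℝ := ∑ k ∈ Finset.univ.filter (fun k => u k ≠ u i), w k with hW
  have hWnn : 0 ≤ W := Finset.sum_nonneg fun k _ => hw0 k
  have hinner : ⟪u i - u j, x - u i⟫ = ∑ k, w k * ⟪u i - u j, u k - u i⟫ := by
    rw [key, inner_sum]
    congr 1; ext k; exact real_inner_smul_right _ _ _
  have hb1 : ⟪u i - u j, x - u i⟫ ≤ -g * W := by
    rw [hinner, ← Finset.sum_filter_add_sum_filter_not Finset.univ (fun k => u k ≠ u i)]
    have hz : ∑ k ∈ Finset.univ.filter (fun k => ¬u k ≠ u i), w k * ⟪u i - u j, u k - u i⟫ = 0 := by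
      apply Finset.sum_eq_zero
      intro k hk
      simp only [Finset.mem_filter, not_not] at hk
      rw [hk.2]
      simp
    rw [hz, add_zero, hW, Finset.mul_sum]
    apply Finset.sum_le_sum
    intro k hk
    simp only [Finset.mem_filter] at hk
    calc w k * ⟪u i - u j, u k - u i⟫ ≤ w k * (-g) :=
          mul_le_mul_of_nonneg_left (hvertg k hk.2) (hw0 k)
      _ = -g * w k := by ring
  have hb2 : ‖x - u i‖ ≤ D * W := by
    rw [key]
    calc ‖∑ k, w k • (u k - u i)‖ ≤ ∑ k, ‖w k • (u k - u i)‖ := norm_sum_le _ _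
      _ = ∑ k, w k * ‖u k - u i‖ := by
          congr 1; ext k; rw [norm_smul, Real.norm_eq_abs, abs_of_nonneg (hw0 k)]
      _ ≤ D * W := by
          rw [← Finset.sum_filter_add_sum_filter_not Finset.univ (fun k => u k ≠ u i)]
          have hz : ∑ k ∈ Finset.univ.filter (fun k => ¬u k ≠ u i), w k * ‖u k - u i‖ = 0 := by
            apply Finset.sum_eq_zero
            intro k hk
            simp only [Finset.mem_filter, not_not] at hk
            rw [hk.2]
            simp
          rw [hz, add_zero, hW, Finset.mul_sum]
          apply Finset.sum_le_sum
          intro k hk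
          calc w k * ‖u k - u i‖ ≤ w k * D :=
                mul_le_mul_of_nonneg_left (hDk _ _ (hu k) (hu i)) (hw0 k)
            _ = D * w k := by ring
  calc ⟪u i - u j, x - u i⟫ ≤ -g * W := hb1
    _ ≤ -(g / D) * ‖x - u i‖ := by
        rw [neg_mul, neg_mul, neg_le_neg_iff]
        rw [div_mul_eq_mul_div, div_le_iff₀ hDpos]
        calc g * ‖x - u i‖ ≤ g * (D * W) := mul_le_mul_of_nonneg_left hb2 hgpos.le
          _ = g * W * D := by ring

lemma my_eq_vertex {m : ℕ} {u : Fin m → E2} {C : Set E2}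
    (hC : C = convexHull ℝ (Set.range u)) (hbd : Bornology.IsBounded C)
    {x y : E2} (hx : x ∈ C) (hy : y ∈ C) (h : ‖x - y‖ = Metric.diam C) :
    ∃ i, x = u i := by
  classical
  set D := Metric.diam C with hD
  have hu : ∀ k, u k ∈ C := fun k => hC ▸ subset_convexHull ℝ _ ⟨k, rfl⟩
  have hDk : ∀ a b : E2, a ∈ C → b ∈ C → ‖a - b‖ ≤ D := by
    intro a b ha hb
    rw [← dist_eq_norm]
    exact dist_le_diam_of_mem hbd ha hb
  obtain ⟨w, hw0, hw1, hwx⟩ := my_repr_of_mem (hC ▸ hx)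
  have key : x - y = ∑ k, w k • (u k - y) := by
    simp only [smul_sub]
    rw [Finset.sum_sub_distrib, ← Finset.sum_smul, hw1, hwx, one_smul]
  have hDnn : 0 ≤ D := le_trans (norm_nonneg _) h.le
  have hsum : ∑ k, w k * ⟪x - y, u k - y⟫ = D ^ 2 := by
    calc ∑ k, w k * ⟪x - y, u k - y⟫ = ⟪x - y, ∑ k, w k • (u k - y)⟫ := by
          rw [inner_sum]
          congr 1; ext k; exact (real_inner_smul_right _ _ _).symm
      _ = ⟪x - y, x - y⟫ := by rw [← key]
      _ = D ^ 2 := by rw [real_inner_self_eq_norm_sq, h]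
  have hterm : ∀ k, ⟪x - y, u k - y⟫ ≤ D ^ 2 := by
    intro k
    calc ⟪x - y, u k - y⟫ ≤ ‖x - y‖ * ‖u k - y‖ := real_inner_le_norm _ _
      _ ≤ D * D := by
          apply mul_le_mul (le_of_eq h) (hDk _ _ (hu k) hy) (norm_nonneg _) hDnn
      _ = D ^ 2 := by ring
  have hzero : ∑ k, w k * (D ^ 2 - ⟪x - y, u k - y⟫) = 0 := by
    simp only [mul_sub]
    rw [Finset.sum_sub_distrib, hsum, ← Finset.sum_mul, hw1, one_mul, sub_self]
  obtain ⟨k₀, -, hk₀⟩ := Finset.exists_ne_zero_of_sum_ne_zero (hw1.trans_ne one_ne_zero)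
  have hwk₀ : 0 < w k₀ := lt_of_le_of_ne (hw0 k₀) (Ne.symm hk₀)
  have hall := (Finset.sum_eq_zero_iff_of_nonneg (fun k _ => by
    have := hterm k
    have := hw0 k
    nlinarith)).mp hzero k₀ (Finset.mem_univ _)
  have hinner₀ : ⟪x - y, u k₀ - y⟫ = D ^ 2 := by
    rcases mul_eq_zero.mp hall with h' | h'
    · exact absurd h' hk₀
    · linarith
  have hnorm : ‖(u k₀ - y) - (x - y)‖ ^ 2 ≤ 0 := by
    have e := norm_sub_sq_real (u k₀ - y) (x - y)
    rw [real_inner_comm] at e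
    have h1 : ‖u k₀ - y‖ ≤ D := hDk _ _ (hu k₀) hy
    rw [e, hinner₀, h]
    nlinarith [norm_nonneg (u k₀ - y)]
  have hz : u k₀ - y - (x - y) = 0 := by
    have := sq_nonneg ‖(u k₀ - y) - (x - y)‖
    have hn : ‖(u k₀ - y) - (x - y)‖ = 0 := by nlinarith
    exact norm_eq_zero.mp hn
  exact ⟨k₀, by linear_combination (norm := abel) -hz⟩

set_option maxHeartbeats 1000000 in
/-- near-diametrical points of a polygon are near diametrical
vertices. Let `u 1, …, u m` (`m ≥ 3`) be pairwise distinct points of the plane,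
each an extreme point of `C := conv{u i}` (i.e. a point of `C` not lying in the
open segment between any two distinct points of `C`). Then there are constants
`B, δ₀ ∈ (0,∞)` such that for every `δ ∈ (0, δ₀)` and all `x, y ∈ C` with
`‖x − y‖ > diam C − δ`, some diametrical pair `(i,j)` (with `i < j` and
`‖u i − u j‖ = diam C`) satisfies `max(‖x − u i‖, ‖y − u j‖) < Bδ` or
`max(‖y − u i‖, ‖x − u j‖) < Bδ`. -/
theorem near_diameter_points_near_diametrical_vertices
    (m : ℕ) (hm : 3 ≤ m)
    (u : Fin m → EuclideanSpace ℝ (Fin 2))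
    (hinj : Function.Injective u)
    (C : Set (EuclideanSpace ℝ (Fin 2)))
    (hC : C = convexHull ℝ (Set.range u))
    (hext : ∀ i : Fin m, u i ∈ C ∧
      ∀ y ∈ C, ∀ z ∈ C, y ≠ z → u i ∉ openSegment ℝ y z) :
    ∃ B δ₀ : ℝ, 0 < B ∧ 0 < δ₀ ∧
      ∀ δ : ℝ, 0 < δ → δ < δ₀ →
        ∀ x ∈ C, ∀ y ∈ C, Metric.diam C - δ < ‖x - y‖ →
          ∃ i j : Fin m, i < j ∧ ‖u i - u j‖ = Metric.diam C ∧
            (max ‖x - u i‖ ‖y - u j‖ < B * δ ∨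
             max ‖y - u i‖ ‖x - u j‖ < B * δ) := by
  classical
  set D := Metric.diam C with hD
  have hCcpt : IsCompact C := hC ▸ (Set.finite_range u).isCompact_convexHull ℝ
  have hbd : Bornology.IsBounded C := hCcpt.isBounded
  have hu : ∀ k, u k ∈ C := fun k => hC ▸ subset_convexHull ℝ _ ⟨k, rfl⟩
  have hDk : ∀ a b : EuclideanSpace ℝ (Fin 2), a ∈ C → b ∈ C → ‖a - b‖ ≤ D := by
    intro a b ha hb
    rw [← dist_eq_norm]
    exact dist_le_diam_of_mem hbd ha hb
  have h01 : (⟨0, by omega⟩ : Fin m) ≠ (⟨1, by omega⟩ : Fin m) := by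
    simp [Fin.ext_iff]
  have hDpos : 0 < D := by
    have h1 : 0 < ‖u ⟨0, by omega⟩ - u ⟨1, by omega⟩‖ := by
      rw [norm_sub_pos_iff]
      exact hinj.ne h01
    exact lt_of_lt_of_le h1 (hDk _ _ (hu _) (hu _))
  -- minimal squared half-gap between distinct vertices
  set P := Finset.univ.filter (fun p : Fin m × Fin m => p.1 ≠ p.2) with hP
  have hPne : P.Nonempty :=
    ⟨(⟨0, by omega⟩, ⟨1, by omega⟩), Finset.mem_filter.mpr ⟨Finset.mem_univ _, h01⟩⟩
  set g := P.inf' hPne (fun p => ‖u p.1 - u p.2‖ ^ 2 / 2) with hgdef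
  have hgpos : 0 < g := by
    rw [hgdef, Finset.lt_inf'_iff]
    intro p hp
    have hne : p.1 ≠ p.2 := (Finset.mem_filter.mp hp).2
    have : 0 < ‖u p.1 - u p.2‖ := by
      rw [norm_sub_pos_iff]
      exact hinj.ne hne
    positivity
  have hg : ∀ k l, u k ≠ u l → g ≤ ‖u k - u l‖ ^ 2 / 2 := by
    intro k l hkl
    have hmem : (k, l) ∈ P :=
      Finset.mem_filter.mpr ⟨Finset.mem_univ _, fun h => hkl (congrArg u h)⟩
    have h2 := Finset.inf'_le (s := P) (fun p => ‖u p.1 - u p.2‖ ^ 2 / 2) hmem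
    rw [hgdef]
    exact h2
  set c := g / D with hc
  have hcpos : 0 < c := div_pos hgpos hDpos
  set K := (C ×ˢ C) ∩ {z : EuclideanSpace ℝ (Fin 2) × EuclideanSpace ℝ (Fin 2) |
    ∀ i j, ‖u i - u j‖ = D → c ≤ ‖z.1 - u i‖ + ‖z.2 - u j‖} with hK
  obtain ⟨η, hηpos, hη⟩ : ∃ η, 0 < η ∧ ∀ z ∈ K, η ≤ D - ‖z.1 - z.2‖ := by
    rcases Set.eq_empty_or_nonempty K with hKe | hKne
    · exact ⟨1, one_pos, fun z hz => by rw [hKe] at hz; exact hz.elim⟩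
    · have hcl : IsClosed {z : EuclideanSpace ℝ (Fin 2) × EuclideanSpace ℝ (Fin 2) |
          ∀ i j, ‖u i - u j‖ = D → c ≤ ‖z.1 - u i‖ + ‖z.2 - u j‖} := by
        have hrw : {z : EuclideanSpace ℝ (Fin 2) × EuclideanSpace ℝ (Fin 2) |
            ∀ i j, ‖u i - u j‖ = D → c ≤ ‖z.1 - u i‖ + ‖z.2 - u j‖}
            = ⋂ (i : Fin m) (j : Fin m), {z : EuclideanSpace ℝ (Fin 2) × EuclideanSpace ℝ (Fin 2) |
              ‖u i - u j‖ = D → c ≤ ‖z.1 - u i‖ + ‖z.2 - u j‖} := by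
          ext z; simp [Set.mem_iInter]
        rw [hrw]
        refine isClosed_iInter fun i => isClosed_iInter fun j => ?_
        by_cases hij : ‖u i - u j‖ = D
        · simp only [hij, true_implies]
          exact isClosed_le continuous_const
            (((continuous_fst.sub continuous_const).norm).add
              ((continuous_snd.sub continuous_const).norm))
        · simp only [hij, false_implies, Set.setOf_true]
          exact isClosed_univ
      have hKcpt : IsCompact K := (hCcpt.prod hCcpt).inter_right hcl
      obtain ⟨z₀, hz₀K, hz₀⟩ := hKcpt.exists_isMinOn hKne
        ((Continuous.continuousOn (by fun_prop) :
          ContinuousOn (fun z : EuclideanSpace ℝ (Fin 2) × EuclideanSpace ℝ (Fin 2) =>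
            D - ‖z.1 - z.2‖) K))
      refine ⟨D - ‖z₀.1 - z₀.2‖, ?_, fun z hz => isMinOn_iff.mp hz₀ z hz⟩
      have hle : ‖z₀.1 - z₀.2‖ ≤ D := hDk _ _ hz₀K.1.1 hz₀K.1.2
      rcases lt_or_eq_of_le hle with hlt | heq
      · linarith
      · exfalso
        obtain ⟨i, hi⟩ := my_eq_vertex hC hbd hz₀K.1.1 hz₀K.1.2 heq
        obtain ⟨j, hj⟩ := my_eq_vertex hC hbd hz₀K.1.2 hz₀K.1.1
          (by rw [norm_sub_rev]; exact heq)
        have hd : ‖u i - u j‖ = D := by rw [← hi, ← hj]; exact heq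
        have h2 := hz₀K.2 i j hd
        rw [← hi, ← hj] at h2
        simp only [sub_self, norm_zero, add_zero] at h2
        linarith
  refine ⟨2 * D ^ 2 / g, min η D, by positivity, lt_min hηpos hDpos, ?_⟩
  intro δ hδpos hδlt x hx y hy hxy
  have hδη : δ < η := lt_of_lt_of_le hδlt (min_le_left _ _)
  have hδD : δ ≤ D := le_of_lt (lt_of_lt_of_le hδlt (min_le_right _ _))
  have hxyD : ‖x - y‖ ≤ D := hDk _ _ hx hy
  have hex : ∃ i j, ‖u i - u j‖ = D ∧ ‖x - u i‖ + ‖y - u j‖ < c := by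
    by_contra hcon
    push_neg at hcon
    have hmem : (x, y) ∈ K := ⟨⟨hx, hy⟩, fun i j hij => hcon i j hij⟩
    have := hη _ hmem
    simp only at this
    linarith
  obtain ⟨i, j, hijD, hs⟩ := hex
  have hji : ‖u j - u i‖ = D := by rw [norm_sub_rev]; exact hijD
  have cone1 := my_cone_ineq hC hbd hDpos hgpos hg hijD hx
  have cone2 := my_cone_ineq hC hbd hDpos hgpos hg hji hy
  rw [← hD, ← hc] at cone1 cone2
  set a := ‖x - u i‖ with ha
  set b := ‖y - u j‖ with hb
  have hann : 0 ≤ a := norm_nonneg _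
  have hbnn : 0 ≤ b := norm_nonneg _
  have hflip : ⟪u i - u j, y - u j⟫ = -⟪u j - u i, y - u j⟫ := by
    rw [← neg_sub (u j) (u i), inner_neg_left]
  have hde : x - y = (u i - u j) + ((x - u i) - (y - u j)) := by abel
  have hsq : ‖x - y‖ ^ 2 ≤ D ^ 2 - 2 * c * (a + b) + (a + b) ^ 2 := by
    have e := norm_add_sq_real (u i - u j) ((x - u i) - (y - u j))
    rw [← hde, hijD] at e
    have hir : ⟪u i - u j, (x - u i) - (y - u j)⟫
        = ⟪u i - u j, x - u i⟫ - ⟪u i - u j, y - u j⟫ := inner_sub_right _ _ _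
    have habn : ‖(x - u i) - (y - u j)‖ ≤ a + b := norm_sub_le _ _
    have h2 : ‖(x - u i) - (y - u j)‖ ^ 2 ≤ (a + b) ^ 2 := by
      nlinarith [norm_nonneg ((x - u i) - (y - u j))]
    rw [e, hir, hflip]
    nlinarith [cone1, cone2]
  have h1 : (D - δ) ^ 2 < ‖x - y‖ ^ 2 := by
    have h0 : 0 ≤ D - δ := by linarith
    nlinarith [hxy]
  have hs2 : (a + b) ^ 2 ≤ c * (a + b) := by nlinarith
  have hcs : c * (a + b) < 2 * D * δ := by nlinarith [sq_nonneg δ]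
  have hsum_lt : g * (a + b) < 2 * D ^ 2 * δ := by
    have : g * (a + b) = c * (a + b) * D := by
      rw [hc]; field_simp
    rw [this]
    calc c * (a + b) * D < 2 * D * δ * D := by
          apply mul_lt_mul_of_pos_right hcs hDpos
      _ = 2 * D ^ 2 * δ := by ring
  have hfin : a + b < 2 * D ^ 2 / g * δ := by
    have hrw : 2 * D ^ 2 / g * δ = 2 * D ^ 2 * δ / g := by ring
    rw [hrw, lt_div_iff₀ hgpos]
    nlinarith
  have hne : i ≠ j := by
    intro hij'
    rw [hij'] at hijD
    simp only [sub_self, norm_zero] at hijD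
    linarith
  rcases hne.lt_or_gt with hlt | hlt
  · exact ⟨i, j, hlt, hijD, Or.inl (lt_of_le_of_lt
      (max_le (by linarith) (by linarith)) hfin)⟩
  · exact ⟨j, i, hlt, hji, Or.inr (lt_of_le_of_lt
      (max_le (by linarith) (by linarith)) hfin)⟩
end
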